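/- Let d ≥ 2, α ∈ (0,1], n ∈ ℕ, and x₁, …, x_d ≥ 0. Then α^d · ∑ over all (j₁,…,j_d) ∈ ℕ₀^d with j₁+⋯+j_d = n of [Γ(αn+1)/(Γ(αj₁+1)⋯Γ(αj_d+1))] · x₁^{αj₁} ⋯ x_d^{αj_d} ≤ (x₁+⋯+x_d)^{αn}. -/

import Mathlib

open Finset in

lemma filter_eq_AT (d n : ℕ) :
    (Fintype.piFinset fun _ : Fin d => Finset.range (n + 1)).filter
      (fun j => ∑ i, j i = n) = Finset.Nat.antidiagonalTuple d n := by
  ext j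
  simp only [Finset.mem_filter, Fintype.mem_piFinset, Finset.mem_range,
    Finset.Nat.mem_antidiagonalTuple, Nat.lt_succ_iff]
  constructor
  · rintro ⟨_, h⟩; exact h
  · intro h
    refine ⟨fun i => ?_, h⟩
    exact h ▸ Finset.single_le_sum (f := j) (fun _ _ => Nat.zero_le _) (Finset.mem_univ i)

lemma sum_AT_succ {M : Type*} [AddCommMonoid M] (d n : ℕ) (f : (Fin (d + 1) → ℕ) → M) :
    ∑ j ∈ Finset.Nat.antidiagonalTuple (d + 1) n, f j
      = ∑ k ∈ Finset.range (n + 1), ∑ j' ∈ Finset.Nat.antidiagonalTuple d (n - k),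
          f (Fin.cons k j') := by
  rw [Finset.sum_sigma']
  have key : ∑ x ∈ (Finset.range (n + 1)).sigma (fun k => Finset.Nat.antidiagonalTuple d (n - k)),
      f (Fin.cons x.1 x.2) = ∑ j ∈ Finset.Nat.antidiagonalTuple (d + 1) n, f j := by
    refine Finset.sum_nbij' (fun p => Fin.cons p.1 p.2) (fun j => ⟨j 0, Fin.tail j⟩) ?_ ?_ ?_ ?_ ?_
    · intro p hp
      rw [Finset.mem_sigma, Finset.mem_range, Finset.Nat.mem_antidiagonalTuple] at hp
      rw [Finset.Nat.mem_antidiagonalTuple, Fin.sum_univ_succ]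
      simp only [Fin.cons_zero, Fin.cons_succ]
      omega
    · intro j hj
      rw [Finset.Nat.mem_antidiagonalTuple] at hj
      have h0 : j 0 ≤ n := hj ▸ Finset.single_le_sum (f := j) (fun _ _ => Nat.zero_le _) (Finset.mem_univ 0)
      refine Finset.mem_sigma.2 ⟨Finset.mem_range.2 (Nat.lt_succ_of_le h0), ?_⟩
      rw [Finset.Nat.mem_antidiagonalTuple]
      have := Fin.sum_univ_succ j
      simp only [Fin.tail]
      omega
    · intro p _
      refine Sigma.ext ?_ ?_
      · simp
      · simp [Fin.tail_cons]
    · intro j _; exact Fin.cons_self_tail j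
    · intro p _; rfl
  exact key.symm

lemma aux_neo {α : ℝ} (hα0 : 0 < α) (hα1 : α ≤ 1)
    (hneo : ∀ (n : ℕ) (x y : ℝ), 0 ≤ x → 0 ≤ y →
      α * ∑ j ∈ Finset.range (n + 1),
        (Real.Gamma (α * n + 1) /
          (Real.Gamma (α * j + 1) * Real.Gamma (α * ((n : ℝ) - (j : ℝ)) + 1))) *
          x ^ (α * (j : ℝ)) * y ^ (α * ((n : ℝ) - (j : ℝ)))
        ≤ (x + y) ^ (α * (n : ℝ))) :
    ∀ d, 1 ≤ d → ∀ (n : ℕ) (x : Fin d → ℝ), (∀ i, 0 ≤ x i) →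
    α ^ d * ∑ j ∈ Finset.Nat.antidiagonalTuple d n,
      (Real.Gamma (α * n + 1) / ∏ i, Real.Gamma (α * (j i : ℝ) + 1)) *
        ∏ i, (x i) ^ (α * (j i : ℝ)) ≤ (∑ i, x i) ^ (α * (n : ℝ)) := by
  have hΓ : ∀ t : ℝ, 0 ≤ t → 0 < Real.Gamma (t + 1) := fun t ht =>
    Real.Gamma_pos_of_pos (by linarith)
  intro d
  induction d with
  | zero => omega
  | succ d ih =>
    intro _ n x hx
    rcases Nat.eq_zero_or_pos d with hd0 | hd1
    · subst hd0
      simp only [Nat.reduceAdd, Finset.Nat.antidiagonalTuple_one, Finset.sum_singleton,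
        Fin.prod_univ_one, Fin.sum_univ_one, pow_one, Matrix.cons_val_zero,
        Matrix.cons_val_fin_one]
      have h1 : Real.Gamma (α * n + 1) ≠ 0 :=
        (hΓ _ (by positivity)).ne'
      rw [div_self h1, one_mul]
      have h2 : 0 ≤ (x 0) ^ (α * (n : ℝ)) := Real.rpow_nonneg (hx 0) _
      nlinarith
    · set y := ∑ i, x (Fin.succ i) with hy
      have hy0 : 0 ≤ y := Finset.sum_nonneg fun i _ => hx _
      have hx0 : 0 ≤ x 0 := hx 0
      rw [sum_AT_succ]
      have hstep : α ^ (d + 1) * ∑ k ∈ Finset.range (n + 1),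
            ∑ j' ∈ Finset.Nat.antidiagonalTuple d (n - k),
              (Real.Gamma (α * n + 1) / ∏ i, Real.Gamma (α * (((Fin.cons k j' : Fin (d+1) → ℕ) i : ℕ) : ℝ) + 1)) *
                ∏ i, (x i) ^ (α * (((Fin.cons k j' : Fin (d+1) → ℕ) i : ℕ) : ℝ))
          = α * ∑ k ∈ Finset.range (n + 1),
              (Real.Gamma (α * n + 1) /
                (Real.Gamma (α * k + 1) * Real.Gamma (α * ((n : ℝ) - (k : ℝ)) + 1))) *
                (x 0) ^ (α * (k : ℝ)) *
              (α ^ d * ∑ j' ∈ Finset.Nat.antidiagonalTuple d (n - k),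
                (Real.Gamma (α * ((n - k : ℕ) : ℝ) + 1) /
                    ∏ i, Real.Gamma (α * ((j' i : ℕ) : ℝ) + 1)) *
                  ∏ i, (x (Fin.succ i)) ^ (α * ((j' i : ℕ) : ℝ))) := by
        simp only [Finset.mul_sum]
        refine Finset.sum_congr rfl fun k hk => ?_
        rw [Finset.mem_range, Nat.lt_succ_iff] at hk
        have hcast : ((n - k : ℕ) : ℝ) = (n : ℝ) - (k : ℝ) := by
          push_cast [Nat.cast_sub hk]; ring
        refine Finset.sum_congr rfl fun j' hj' => ?_
        rw [Fin.prod_univ_succ, Fin.prod_univ_succ]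
        simp only [Fin.cons_zero, Fin.cons_succ, hcast, pow_succ]
        have hΓ1 : Real.Gamma (α * (k : ℝ) + 1) ≠ 0 := (hΓ _ (by positivity)).ne'
        have hΓ2 : Real.Gamma (α * ((n : ℝ) - (k : ℝ)) + 1) ≠ 0 := by
          refine (hΓ _ ?_).ne'
          have h : ((k : ℕ) : ℝ) ≤ (n : ℝ) := by exact_mod_cast hk
          have : (0 : ℝ) ≤ (n : ℝ) - (k : ℝ) := by linarith
          positivity
        have hΓ3 : (∏ i, Real.Gamma (α * ((j' i : ℕ) : ℝ) + 1)) ≠ 0 := by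
          refine Finset.prod_ne_zero_iff.2 fun i _ => (hΓ _ (by positivity)).ne'
        field_simp
      rw [hstep]
      have hle1 : ∀ k ∈ Finset.range (n + 1),
          (Real.Gamma (α * n + 1) /
              (Real.Gamma (α * k + 1) * Real.Gamma (α * ((n : ℝ) - (k : ℝ)) + 1))) *
              (x 0) ^ (α * (k : ℝ)) *
            (α ^ d * ∑ j' ∈ Finset.Nat.antidiagonalTuple d (n - k),
              (Real.Gamma (α * ((n - k : ℕ) : ℝ) + 1) /
                  ∏ i, Real.Gamma (α * ((j' i : ℕ) : ℝ) + 1)) *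
                ∏ i, (x (Fin.succ i)) ^ (α * ((j' i : ℕ) : ℝ)))
          ≤ (Real.Gamma (α * n + 1) /
              (Real.Gamma (α * k + 1) * Real.Gamma (α * ((n : ℝ) - (k : ℝ)) + 1))) *
              (x 0) ^ (α * (k : ℝ)) * y ^ (α * ((n : ℝ) - (k : ℝ))) := by
        intro k hk
        rw [Finset.mem_range, Nat.lt_succ_iff] at hk
        have hcast : ((n - k : ℕ) : ℝ) = (n : ℝ) - (k : ℝ) := by
          push_cast [Nat.cast_sub hk]; ring
        have hcoef : 0 ≤ (Real.Gamma (α * n + 1) /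
              (Real.Gamma (α * k + 1) * Real.Gamma (α * ((n : ℝ) - (k : ℝ)) + 1))) *
              (x 0) ^ (α * (k : ℝ)) := by
          have h1 := hΓ (α * n) (by positivity)
          have h2 := hΓ (α * k) (by positivity)
          have h3 : 0 < Real.Gamma (α * ((n : ℝ) - (k : ℝ)) + 1) := by
            refine hΓ _ ?_
            have h : ((k : ℕ) : ℝ) ≤ (n : ℝ) := by exact_mod_cast hk
            have : (0 : ℝ) ≤ (n : ℝ) - (k : ℝ) := by linarith
            positivity
          have h4 : 0 ≤ (x 0) ^ (α * (k : ℝ)) := Real.rpow_nonneg hx0 _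
          positivity
        refine mul_le_mul_of_nonneg_left ?_ hcoef
        rw [← hcast]
        have := ih hd1 (n - k) (fun i => x (Fin.succ i)) (fun i => hx _)
        simpa [← hy] using this
      calc α * ∑ k ∈ Finset.range (n + 1),
            (Real.Gamma (α * n + 1) /
              (Real.Gamma (α * k + 1) * Real.Gamma (α * ((n : ℝ) - (k : ℝ)) + 1))) *
              (x 0) ^ (α * (k : ℝ)) *
            (α ^ d * ∑ j' ∈ Finset.Nat.antidiagonalTuple d (n - k),
              (Real.Gamma (α * ((n - k : ℕ) : ℝ) + 1) /
                  ∏ i, Real.Gamma (α * ((j' i : ℕ) : ℝ) + 1)) *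
                ∏ i, (x (Fin.succ i)) ^ (α * ((j' i : ℕ) : ℝ)))
          ≤ α * ∑ k ∈ Finset.range (n + 1),
            (Real.Gamma (α * n + 1) /
              (Real.Gamma (α * k + 1) * Real.Gamma (α * ((n : ℝ) - (k : ℝ)) + 1))) *
              (x 0) ^ (α * (k : ℝ)) * y ^ (α * ((n : ℝ) - (k : ℝ))) := by
            exact mul_le_mul_of_nonneg_left (Finset.sum_le_sum hle1) hα0.le
        _ ≤ (x 0 + y) ^ (α * (n : ℝ)) := hneo n (x 0) y hx0 hy0
        _ = (∑ i, x i) ^ (α * (n : ℝ)) := by rw [Fin.sum_univ_succ]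

/-- Multivariate neo-classical inequality for `α ∈ (0,1]`, assuming the
two-variable neo-classical inequality as a hypothesis. -/
theorem multivariate_neo_classical (d : ℕ) (hd : 2 ≤ d)
    (α : ℝ) (hα0 : 0 < α) (hα1 : α ≤ 1)
    (hneo : ∀ (n : ℕ) (x y : ℝ), 0 ≤ x → 0 ≤ y →
      α * ∑ j ∈ Finset.range (n + 1),
        (Real.Gamma (α * n + 1) /
          (Real.Gamma (α * j + 1) * Real.Gamma (α * ((n : ℝ) - (j : ℝ)) + 1))) *
          x ^ (α * (j : ℝ)) * y ^ (α * ((n : ℝ) - (j : ℝ)))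
        ≤ (x + y) ^ (α * (n : ℝ)))
    (n : ℕ) (x : Fin d → ℝ) (hx : ∀ i, 0 ≤ x i) :
    α ^ d * ∑ j ∈ (Fintype.piFinset fun _ : Fin d => Finset.range (n + 1)).filter
        (fun j => ∑ i, j i = n),
      (Real.Gamma (α * n + 1) / ∏ i, Real.Gamma (α * (j i : ℝ) + 1)) *
        ∏ i, (x i) ^ (α * (j i : ℝ))
      ≤ (∑ i, x i) ^ (α * (n : ℝ)) := by
  rw [filter_eq_AT d n]
  exact aux_neo hα0 hα1 hneo d (by omega) n x hx
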